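/- Let G be an n-vertex graph with minimum degree 1 and let H ≠ K_Δ^loop be a finite graph without isolated vertices whose maximum degree Δ satisfies Σ_{v∈V(H)} d(v) ≥ Δ^2. Then hom(G, H) ≤ hom(K_2, H)^{n/2} = (Σ_{v∈V(H)} d(v))^{n/2}. -/

import Mathlib

open Finset

/-- Number of graph homomorphisms from the (loopless or looped) graph given by
relation `G` on `U` to the graph given by relation `H` on `V`. -/
def HomCount {U V : Type*} [Fintype U] [DecidableEq U] [Fintype V] [DecidableEq V]
    (G : U → U → Prop) [DecidableRel G] (H : V → V → Prop) [DecidableRel H] : ℕ :=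
  Fintype.card {f : U → V // ∀ a b, G a b → H (f a) (f b)}

/-- Degree of a vertex in a graph with loops (a loop counts once). -/
def hdeg {V : Type*} [Fintype V] (H : V → V → Prop) [DecidableRel H] (v : V) : ℕ :=
  (Finset.univ.filter (H v)).card

/-- Adjacency matrix (over ℝ) of the graph with loops given by `H`. -/
def adjMat {V : Type*} [Fintype V] (H : V → V → Prop) [DecidableRel H] : Matrix V V ℝ :=
  fun i j => if H i j then 1 else 0

/-- Adjacency relation of the cycle `C_k` on vertex set `Fin k` (for `k ≥ 3`). -/
def cycAdj (k : ℕ) (i j : Fin k) : Prop :=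
  (i.val + 1) % k = j.val ∨ (j.val + 1) % k = i.val

instance (k : ℕ) : DecidableRel (cycAdj k) := fun i j => by
  unfold cycAdj; infer_instance

/-- Adjacency relation of the path `P_k` on vertex set `Fin k`. -/
def pathAdj (k : ℕ) (i j : Fin k) : Prop :=
  i.val + 1 = j.val ∨ j.val + 1 = i.val

instance (k : ℕ) : DecidableRel (pathAdj k) := fun i j => by
  unfold pathAdj; infer_instance

/-- Adjacency relation of the star `K_{1,x-1}` on `Fin x`, with center `0`. -/
def starAdj (x : ℕ) (i j : Fin x) : Prop :=
  (i.val = 0 ∧ j.val ≠ 0) ∨ (j.val = 0 ∧ i.val ≠ 0)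

instance (x : ℕ) : DecidableRel (starAdj x) := fun i j => by
  unfold starAdj; infer_instance

/-! ### Auxiliary lemmas -/

section Aux

set_option linter.unusedSectionVars false

lemma homCount_eq_natCard {U V : Type*} [Fintype U] [DecidableEq U] [Fintype V] [DecidableEq V]
    (G : U → U → Prop) [DecidableRel G] (H : V → V → Prop) [DecidableRel H] :
    HomCount G H = Nat.card {f : U → V // ∀ a b, G a b → H (f a) (f b)} := by
  rw [HomCount, Nat.card_eq_fintype_card]

lemma hdeg_card {V : Type*} [Fintype V] [DecidableEq V] (H : V → V → Prop) [DecidableRel H]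
    (v : V) : Nat.card {w : V // H v w} = hdeg H v := by
  simp [hdeg, Nat.card_eq_fintype_card, Fintype.card_subtype]

lemma homcount_K2 {V : Type*} [Fintype V] [DecidableEq V]
    (G : Fin 2 → Fin 2 → Prop) [DecidableRel G] (hG : ∀ a b, G a b ↔ a ≠ b)
    (H : V → V → Prop) [DecidableRel H] (hsym : ∀ a b, H a b → H b a) :
    HomCount G H = ∑ v : V, hdeg H v := by
  have e : {f : Fin 2 → V // ∀ a b : Fin 2, G a b → H (f a) (f b)} ≃
      Σ v : V, {w : V // H v w} :=
    { toFun := fun f => ⟨f.1 0, f.1 1, f.2 0 1 ((hG 0 1).2 (by decide))⟩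
      invFun := fun p => ⟨fun i => if i = 0 then p.1 else p.2.1, by
        intro a b hab
        rw [hG] at hab
        fin_cases a <;> fin_cases b <;> simp_all
        · exact p.2.2
        · exact hsym _ _ p.2.2⟩
      left_inv := by
        rintro ⟨f, hf⟩
        ext i
        fin_cases i <;> simp
      right_inv := by rintro ⟨v, w, h⟩; simp }
  rw [homCount_eq_natCard, Nat.card_congr e, Nat.card_eq_fintype_card, Fintype.card_sigma]
  exact Finset.sum_congr rfl fun v _ => (Nat.card_eq_fintype_card.symm).trans (hdeg_card H v)

variable {α : Type*} [Fintype α] [DecidableEq α]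

/-- spanning star forest structure on the vertex set `S`. -/
def Good (G : SimpleGraph α) (S : Finset α) (σ : α → α) : Prop :=
  (∀ v ∈ S, σ v ∈ S) ∧ (∀ v ∈ S, σ (σ v) = σ v) ∧ (∀ v ∈ S, σ v ≠ v → G.Adj v (σ v)) ∧
  (∀ c ∈ S, σ c = c → ∃ v ∈ S, v ≠ c ∧ σ v = c) ∧ (∀ v ∉ S, σ v = v)

lemma good_extend {G : SimpleGraph α} {S : Finset α} {σ : α → α} (hS : Good G S σ)
    (c : α) (L : Finset α) (hc : c ∉ S) (hcL : c ∉ L) (hLS : ∀ u ∈ L, u ∉ S)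
    (hLne : L.Nonempty) (hadj : ∀ u ∈ L, G.Adj u c) :
    ∃ σ', Good G (insert c L ∪ S) σ' := by
  obtain ⟨h1, h2, h3, h4, h5⟩ := hS
  refine ⟨fun u => if u = c ∨ u ∈ L then c else σ u, ?_, ?_, ?_, ?_, ?_⟩
  · intro v hv
    by_cases h : v = c ∨ v ∈ L
    · simp [h]
    · simp only [if_neg h]
      simp only [mem_union, mem_insert] at hv
      rcases hv with (rfl | hL) | hSv
      · exact absurd (Or.inl rfl) h
      · exact absurd (Or.inr hL) h
      · exact mem_union_right _ (h1 v hSv)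
  · intro v hv
    by_cases h : v = c ∨ v ∈ L
    · simp [h]
    · simp only [if_neg h]
      simp only [mem_union, mem_insert] at hv
      rcases hv with (rfl | hL) | hSv
      · exact absurd (Or.inl rfl) h
      · exact absurd (Or.inr hL) h
      · have hσ : σ v ∈ S := h1 v hSv
        have : ¬ (σ v = c ∨ σ v ∈ L) := by
          rintro (rfl | hmem)
          · exact hc hσ
          · exact hLS _ hmem hσ
        rw [if_neg this]
        exact h2 v hSv
  · intro v hv hne
    by_cases h : v = c ∨ v ∈ L
    · simp only [if_pos h] at hne ⊢
      rcases h with rfl | hL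
      · exact absurd rfl hne
      · exact hadj v hL
    · simp only [if_neg h] at hne ⊢
      simp only [mem_union, mem_insert] at hv
      rcases hv with (rfl | hL) | hSv
      · exact absurd (Or.inl rfl) h
      · exact absurd (Or.inr hL) h
      · exact h3 v hSv hne
  · intro c' hc' hfix
    by_cases h : c' = c ∨ c' ∈ L
    · simp only [if_pos h] at hfix
      subst hfix
      obtain ⟨u, hu⟩ := hLne
      refine ⟨u, ?_, ?_, ?_⟩
      · exact mem_union_left _ (mem_insert_of_mem hu)
      · rintro rfl; exact hcL hu
      · simp only [if_pos (Or.inr hu)]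
    · simp only [if_neg h] at hfix
      simp only [mem_union, mem_insert] at hc'
      rcases hc' with (rfl | hL) | hSv
      · exact absurd (Or.inl rfl) h
      · exact absurd (Or.inr hL) h
      · obtain ⟨v, hvS, hvne, hvfix⟩ := h4 c' hSv hfix
        have : ¬ (v = c ∨ v ∈ L) := by
          rintro (rfl | hmem)
          · exact hc hvS
          · exact hLS _ hmem hvS
        exact ⟨v, mem_union_right _ hvS, hvne, by simp only [if_neg this]; exact hvfix⟩
  · intro v hv
    simp only [mem_union, mem_insert, not_or] at hv
    simp only [if_neg (show ¬(v = c ∨ v ∈ L) by tauto)]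
    exact h5 v hv.2

set_option maxHeartbeats 1000000 in
lemma good_exists (G : SimpleGraph α) [DecidableRel G.Adj] :
    ∀ S : Finset α, (∀ v ∈ S, ∃ w ∈ S, G.Adj v w) → ∃ σ, Good G S σ := by
  intro S
  induction S using Finset.strongInduction with
  | _ S ih =>
    intro hdeg
    rcases S.eq_empty_or_nonempty with rfl | ⟨v, hv⟩
    · exact ⟨id, by simp [Good]⟩
    obtain ⟨w, hw, hadj⟩ := hdeg v hv
    have hvw : v ≠ w := G.ne_of_adj hadj
    set D : Finset α :=
      S.filter (fun u => u ≠ v ∧ u ≠ w ∧ ∀ z ∈ S, G.Adj u z → z = v ∨ z = w) with hD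
    set Dv : Finset α := D.filter (fun u => G.Adj u v) with hDv
    set Dw : Finset α := D \ Dv with hDw
    have hDsub : D ⊆ S := filter_subset _ _
    have hvD : v ∉ D := fun h => ((mem_filter.1 h).2).1 rfl
    have hwD : w ∉ D := fun h => ((mem_filter.1 h).2).2.1 rfl
    have hDwadj : ∀ u ∈ Dw, G.Adj u w := by
      intro u hu
      obtain ⟨huD, hunv⟩ := mem_sdiff.1 hu
      obtain ⟨huS, _, _, hcl⟩ := mem_filter.1 huD
      obtain ⟨z, hz, hadjz⟩ := hdeg u huS
      rcases hcl z hz hadjz with h | h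
      · exact absurd (mem_filter.2 ⟨huD, h ▸ hadjz⟩) hunv
      · exact h ▸ hadjz
    have hDvadj : ∀ u ∈ Dv, G.Adj u v := fun u hu => (mem_filter.1 hu).2
    set A : Finset α := insert v (insert w D) with hA
    set S' : Finset α := S \ A with hS'
    have hAsub : A ⊆ S := by
      intro u hu
      simp only [hA, mem_insert] at hu
      rcases hu with rfl | rfl | h
      · exact hv
      · exact hw
      · exact hDsub h
    have hS'sub : S' ⊂ S := by
      refine Finset.ssubset_iff_of_subset (sdiff_subset) |>.2 ⟨v, hv, ?_⟩
      simp [hS', hA]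
    have hmin' : ∀ u ∈ S', ∃ z ∈ S', G.Adj u z := by
      intro u hu
      obtain ⟨huS, huA⟩ := mem_sdiff.1 hu
      simp only [hA, mem_insert, not_or] at huA
      obtain ⟨hunv, hunw, hunD⟩ := huA
      have : ¬ (u ≠ v ∧ u ≠ w ∧ ∀ z ∈ S, G.Adj u z → z = v ∨ z = w) := by
        intro hcon
        exact hunD (mem_filter.2 ⟨huS, hcon⟩)
      push_neg at this
      obtain ⟨z, hzS, hzadj, hznv, hznw⟩ := this hunv hunw
      refine ⟨z, mem_sdiff.2 ⟨hzS, ?_⟩, hzadj⟩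
      simp only [hA, mem_insert, not_or]
      refine ⟨hznv, hznw, fun hzD => ?_⟩
      obtain ⟨_, _, _, hcl⟩ := mem_filter.1 hzD
      rcases hcl u huS (G.adj_symm hzadj) with rfl | rfl
      · exact hunv rfl
      · exact hunw rfl
    obtain ⟨σ₀, hσ₀⟩ := ih S' hS'sub hmin'
    have hvS' : v ∉ S' := by simp [hS', hA]
    have hwS' : w ∉ S' := by simp [hS', hA]
    have hDS' : ∀ u ∈ D, u ∉ S' := by
      intro u hu hcon
      exact (mem_sdiff.1 hcon).2 (by simp [hA, mem_insert_of_mem (mem_insert_of_mem hu)])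
    by_cases hDvne : Dv.Nonempty
    · by_cases hDwne : Dw.Nonempty
      · -- two stars
        obtain ⟨σ₁, hσ₁⟩ := good_extend hσ₀ w Dw hwS'
          (fun h => hwD ((mem_sdiff.1 h).1)) (fun u hu => hDS' u (mem_sdiff.1 hu).1)
          hDwne hDwadj
        have hc2 : v ∉ insert w Dw ∪ S' := by
          simp only [mem_union, mem_insert, not_or]
          exact ⟨⟨hvw, fun h => hvD (mem_sdiff.1 h).1⟩, hvS'⟩
        have hc3 : v ∉ Dv := fun h => hvD (mem_filter.1 h).1
        have hc4 : ∀ u ∈ Dv, u ∉ insert w Dw ∪ S' := by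
          intro u hu
          simp only [mem_union, mem_insert, not_or]
          have huD : u ∈ D := (mem_filter.1 hu).1
          exact ⟨⟨fun h => hwD (h ▸ huD), fun h => (mem_sdiff.1 h).2 hu⟩, hDS' u huD⟩
        obtain ⟨σ₂, hσ₂⟩ := good_extend hσ₁ v Dv hc2 hc3 hc4 hDvne hDvadj
        refine ⟨σ₂, ?_⟩
        have : insert v Dv ∪ (insert w Dw ∪ S') = S := by
          have hsplit : ∀ x, x ∈ D ↔ x ∈ Dv ∨ x ∈ Dw := by
            intro x
            simp only [hDw, mem_sdiff]
            constructor
            · intro hx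
              by_cases hxv : x ∈ Dv
              · exact Or.inl hxv
              · exact Or.inr ⟨hx, hxv⟩
            · rintro (hx | ⟨hx, _⟩)
              · exact (mem_filter.1 hx).1
              · exact hx
          have h1 : insert v Dv ∪ (insert w Dw ∪ S') = A ∪ S' := by
            ext u
            simp only [hA, mem_union, mem_insert]
            have := hsplit u
            tauto
          rw [h1, hS', Finset.union_sdiff_of_subset hAsub]
        rwa [this] at hσ₂
      · -- Dw empty: one star centered at v with leaves {w} ∪ Dv
        have hDeq : D = Dv := by
          rw [Finset.not_nonempty_iff_eq_empty, hDw, Finset.sdiff_eq_empty_iff_subset] at hDwne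
          exact Finset.Subset.antisymm hDwne (filter_subset _ _)
        obtain ⟨σ₁, hσ₁⟩ := good_extend hσ₀ v (insert w Dv) hvS'
          (by simp only [mem_insert, not_or]; exact ⟨hvw, fun h => hvD (hDeq ▸ (mem_filter.1 h).1)⟩)
          (by intro u hu
              rcases mem_insert.1 hu with rfl | h
              · exact hwS'
              · exact hDS' u (hDeq ▸ (mem_filter.1 h).1))
          ⟨w, mem_insert_self _ _⟩
          (by intro u hu
              rcases mem_insert.1 hu with rfl | h
              · exact G.adj_symm hadj
              · exact hDvadj u h)
        refine ⟨σ₁, ?_⟩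
        have : insert v (insert w Dv) ∪ S' = S := by
          rw [← hDeq, ← hA, hS', Finset.union_sdiff_of_subset hAsub]
        rwa [this] at hσ₁
    · -- Dv empty: one star centered at w with leaves {v} ∪ Dw
      have hDeq : D = Dw := by
        rw [Finset.not_nonempty_iff_eq_empty] at hDvne
        rw [hDw, hDvne, Finset.sdiff_empty]
      obtain ⟨σ₁, hσ₁⟩ := good_extend hσ₀ w (insert v Dw) hwS'
        (by simp only [mem_insert, not_or]
            exact ⟨fun h => hvw h.symm, fun h => hwD (hDeq ▸ h)⟩)
        (by intro u hu
            rcases mem_insert.1 hu with rfl | h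
            · exact hvS'
            · exact hDS' u (hDeq ▸ h))
        ⟨v, mem_insert_self _ _⟩
        (by intro u hu
            rcases mem_insert.1 hu with rfl | h
            · exact hadj
            · exact hDwadj u h)
      refine ⟨σ₁, ?_⟩
      have : insert w (insert v Dw) ∪ S' = S := by
        have : insert w (insert v Dw) = A := by
          rw [hA, ← hDeq, Finset.insert_comm]
        rw [this, hS', Finset.union_sdiff_of_subset hAsub]
      rwa [this] at hσ₁

variable {V : Type*} [Fintype V] [DecidableEq V]

lemma homCount_le_forest (G : α → α → Prop) [DecidableRel G]
    (H : V → V → Prop) [DecidableRel H] (σ : α → α)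
    (hadj : ∀ v, σ v ≠ v → G v (σ v)) :
    HomCount G H ≤ Nat.card {f : α → V // ∀ u, σ u ≠ u → H (f u) (f (σ u))} := by
  rw [homCount_eq_natCard]
  apply Nat.card_le_card_of_injective
    (fun f => (⟨f.1, fun u hu => f.2 u (σ u) (hadj u hu)⟩ :
      {f : α → V // ∀ u, σ u ≠ u → H (f u) (f (σ u))}))
  intro f f' h
  exact Subtype.ext
    (congrArg (fun g : {f : α → V // ∀ u, σ u ≠ u → H (f u) (f (σ u))} => g.1) h)

lemma card_forest_le (H : V → V → Prop) [DecidableRel H] (hsym : ∀ a b, H a b → H b a)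
    (σ : α → α) (idem : ∀ u, σ (σ u) = σ u) :
    Nat.card {f : α → V // ∀ u, σ u ≠ u → H (f u) (f (σ u))} ≤
      ∏ c : {c : α // σ c = c}, ∑ x : V,
        hdeg H x ^ Nat.card {u : α // σ u = c.1 ∧ u ≠ c.1} := by
  classical
  have hΦ : Function.Injective
      (fun (f : {f : α → V // ∀ u, σ u ≠ u → H (f u) (f (σ u))}) =>
        (fun c => ⟨(f.1 c.1, fun u => f.1 u.1), fun u => by
            have hne : σ u.1 ≠ u.1 := by
              rw [u.2.1]; exact Ne.symm u.2.2
            have := f.2 u.1 hne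
            rwa [u.2.1] at this⟩ :
          Π c : {c : α // σ c = c},
            {p : V × ({u : α // σ u = c.1 ∧ u ≠ c.1} → V) // ∀ u, H (p.2 u) p.1})) := by
    intro f f' h
    apply Subtype.ext
    funext u
    by_cases hu : σ u = u
    · have h1 := congrArg Subtype.val (congrFun h ⟨u, hu⟩)
      exact congrArg Prod.fst h1
    · have h1 := congrArg Subtype.val (congrFun h ⟨σ u, idem u⟩)
      have h2 := congrArg Prod.snd h1
      exact congrFun h2 ⟨u, rfl, fun e => hu e.symm⟩
  refine (Nat.card_le_card_of_injective _ hΦ).trans (le_of_eq ?_)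
  rw [Nat.card_eq_fintype_card, Fintype.card_pi]
  refine Finset.prod_congr rfl fun c _ => ?_
  have e : {p : V × ({u : α // σ u = c.1 ∧ u ≠ c.1} → V) // ∀ u, H (p.2 u) p.1} ≃
      Σ x : V, ({u : α // σ u = c.1 ∧ u ≠ c.1} → {y : V // H y x}) :=
    { toFun := fun p => ⟨p.1.1, fun u => ⟨p.1.2 u, p.2 u⟩⟩
      invFun := fun q => ⟨(q.1, fun u => (q.2 u).1), fun u => (q.2 u).2⟩
      left_inv := fun p => rfl
      right_inv := fun q => rfl }
  rw [← Nat.card_eq_fintype_card, Nat.card_congr e, Nat.card_eq_fintype_card,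
    Fintype.card_sigma]
  refine Finset.sum_congr rfl fun x _ => ?_
  rw [Fintype.card_fun]
  congr 1
  · rw [Fintype.card_subtype]
    unfold hdeg
    congr 1
    ext y
    simp only [Finset.mem_filter, Finset.mem_univ, true_and]
    exact ⟨fun hy => hsym _ _ hy, fun hy => hsym _ _ hy⟩
  · rw [Nat.card_eq_fintype_card]

lemma prod_rpow_const {ι : Type*} (t : Finset ι) {x : ℝ} (hx : 0 < x) (e : ι → ℝ) :
    ∏ i ∈ t, x ^ e i = x ^ (∑ i ∈ t, e i) := by
  classical
  induction t using Finset.cons_induction with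
  | empty => simp
  | cons a t ha ih => rw [Finset.prod_cons, Finset.sum_cons, ih, ← Real.rpow_add hx]

lemma sum_fibers (σ : α → α) (idem : ∀ u, σ (σ u) = σ u) :
    ∑ c : {c : α // σ c = c}, (Nat.card {u : α // σ u = c.1 ∧ u ≠ c.1} + 1) =
      Fintype.card α := by
  classical
  have h0 : Fintype.card α =
      ∑ c ∈ univ.filter (fun c => σ c = c), (univ.filter (fun u => σ u = c)).card := by
    rw [← Finset.card_univ]
    exact Finset.card_eq_sum_card_fiberwise
      (fun u _ => mem_filter.2 ⟨mem_univ _, idem u⟩)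
  have h1 : ∀ c ∈ univ.filter (fun c => σ c = c),
      (univ.filter (fun u => σ u = c)).card =
        Nat.card {u : α // σ u = c ∧ u ≠ c} + 1 := by
    intro c hc
    have hcc : σ c = c := (mem_filter.1 hc).2
    have : univ.filter (fun u => σ u = c) =
        insert c (univ.filter (fun u => σ u = c ∧ u ≠ c)) := by
      ext u
      simp only [mem_filter, mem_univ, true_and, mem_insert]
      constructor
      · intro h
        by_cases hu : u = c
        · exact Or.inl hu
        · exact Or.inr ⟨h, hu⟩
      · rintro (rfl | ⟨h, _⟩)
        · exact hcc
        · exact h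
    rw [this, Finset.card_insert_of_notMem (by simp), Nat.card_eq_fintype_card,
      Fintype.card_subtype]
  rw [h0, Finset.sum_congr rfl h1]
  have hmem : ∀ x : α, x ∈ univ.filter (fun c => σ c = c) ↔ σ x = x := by
    intro x; simp
  exact (Finset.sum_subtype _ hmem (fun c => Nat.card {u : α // σ u = c ∧ u ≠ c} + 1)).symm

lemma sum_pow_le_rpow (H : V → V → Prop) [DecidableRel H]
    (Δ : ℕ) (hΔd : ∀ x, hdeg H x ≤ Δ) (hΔ1 : 1 ≤ Δ)
    (hcond : Δ ^ 2 ≤ ∑ x : V, hdeg H x) (ℓ : ℕ) (hℓ : 1 ≤ ℓ) :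
    ((∑ x : V, hdeg H x ^ ℓ : ℕ) : ℝ) ≤
      ((∑ x : V, hdeg H x : ℕ) : ℝ) ^ (((ℓ : ℝ) + 1) / 2) := by
  set s : ℕ := ∑ x : V, hdeg H x with hs
  have hs1 : 1 ≤ s := le_trans (by nlinarith) hcond
  have hsr0 : (0 : ℝ) < (s : ℝ) := by exact_mod_cast hs1
  have h1 : (∑ x : V, hdeg H x ^ ℓ) ≤ Δ ^ (ℓ - 1) * s := by
    rw [hs, Finset.mul_sum]
    apply Finset.sum_le_sum
    intro x _
    calc hdeg H x ^ ℓ = hdeg H x ^ (ℓ - 1) * hdeg H x := by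
          rw [← pow_succ]; congr 1; omega
      _ ≤ Δ ^ (ℓ - 1) * hdeg H x :=
          Nat.mul_le_mul_right _ (Nat.pow_le_pow_left (hΔd x) _)
  have h2 : ((∑ x : V, hdeg H x ^ ℓ : ℕ) : ℝ) ≤ (Δ : ℝ) ^ (ℓ - 1) * (s : ℝ) := by
    exact_mod_cast h1
  have hΔs : (Δ : ℝ) ≤ (s : ℝ) ^ ((1 : ℝ) / 2) := by
    rw [← Real.sqrt_eq_rpow, Real.le_sqrt (by positivity) (le_of_lt hsr0)]
    exact_mod_cast hcond
  have h3 : (Δ : ℝ) ^ (ℓ - 1) ≤ ((s : ℝ) ^ ((1 : ℝ) / 2)) ^ (ℓ - 1) :=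
    pow_le_pow_left₀ (by positivity) hΔs _
  have h4 : ((s : ℝ) ^ ((1 : ℝ) / 2)) ^ (ℓ - 1) = (s : ℝ) ^ ((((ℓ : ℝ)) - 1) / 2) := by
    rw [← Real.rpow_natCast ((s : ℝ) ^ ((1 : ℝ) / 2)) (ℓ - 1), ← Real.rpow_mul (le_of_lt hsr0)]
    congr 1
    have : ((ℓ - 1 : ℕ) : ℝ) = (ℓ : ℝ) - 1 := by
      have := Nat.cast_sub hℓ (R := ℝ)
      simpa using this
    rw [this]; ring
  calc ((∑ x : V, hdeg H x ^ ℓ : ℕ) : ℝ) ≤ (Δ : ℝ) ^ (ℓ - 1) * (s : ℝ) := h2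
    _ ≤ (s : ℝ) ^ ((((ℓ : ℝ)) - 1) / 2) * (s : ℝ) := by
        rw [← h4]
        exact mul_le_mul_of_nonneg_right h3 (le_of_lt hsr0)
    _ = (s : ℝ) ^ (((ℓ : ℝ) + 1) / 2) := by
        have hadd := Real.rpow_add hsr0 (((ℓ : ℝ) - 1) / 2) 1
        rw [Real.rpow_one] at hadd
        rw [← hadd]
        congr 1
        ring

end Aux

/-- if `G` has `n` vertices, minimum degree `1`, and
`H ≠ K_Δ^loop` has no isolated vertices with `∑ d(v) ≥ Δ²`, then
`hom(G,H) ≤ hom(K₂,H)^{n/2} = (∑ d(v))^{n/2}`. -/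
theorem min_degree_one_hom_bound {n : ℕ} (hn : 2 ≤ n)
    (G : SimpleGraph (Fin n)) [DecidableRel G.Adj]
    (hmin : ∀ v, 1 ≤ G.degree v)
    {V : Type*} [Fintype V] [DecidableEq V]
    (H : V → V → Prop) [DecidableRel H] (hsym : ∀ a b, H a b → H b a)
    (hiso : ∀ v, ∃ w, H v w)
    (Δ : ℕ) (hΔ : Δ = Finset.univ.sup (hdeg H))
    (hne : ¬ (Fintype.card V = Δ ∧ ∀ a b : V, H a b))
    (hcond : Δ ^ 2 ≤ ∑ v : V, hdeg H v) :
    (HomCount G.Adj H : ℝ) ≤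
        (HomCount (fun i j : Fin 2 => i ≠ j) H : ℝ) ^ ((n : ℝ) / 2) ∧
      (HomCount (fun i j : Fin 2 => i ≠ j) H : ℝ) ^ ((n : ℝ) / 2) =
        ((∑ v : V, hdeg H v : ℕ) : ℝ) ^ ((n : ℝ) / 2) := by
  classical
  have hK2 : HomCount (fun i j : Fin 2 => i ≠ j) H = ∑ v : V, hdeg H v :=
    homcount_K2 _ (fun a b => Iff.rfl) H hsym
  -- V is nonempty (otherwise `hne` fails), so Δ ≥ 1
  have hVne : Nonempty V := by
    by_contra h
    rw [not_nonempty_iff] at h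
    apply hne
    refine ⟨?_, fun a b => (h.false a).elim⟩
    rw [hΔ]
    simp [Finset.univ_eq_empty]
  have hΔ1 : 1 ≤ Δ := by
    obtain ⟨v0⟩ := hVne
    obtain ⟨w0, hw0⟩ := hiso v0
    have h1 : 1 ≤ hdeg H v0 :=
      Finset.card_pos.2 ⟨w0, Finset.mem_filter.2 ⟨Finset.mem_univ _, hw0⟩⟩
    rw [hΔ]
    exact le_trans h1 (Finset.le_sup (Finset.mem_univ v0))
  have hΔd : ∀ x, hdeg H x ≤ Δ := fun x => hΔ ▸ Finset.le_sup (Finset.mem_univ x)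
  have hs1 : 1 ≤ ∑ v : V, hdeg H v := le_trans (by nlinarith) hcond
  have hsr0 : (0 : ℝ) < ((∑ v : V, hdeg H v : ℕ) : ℝ) := by exact_mod_cast hs1
  -- spanning star forest
  have hedge : ∀ v : Fin n, ∃ w, G.Adj v w := by
    intro v
    have h1 : 0 < (G.neighborFinset v).card := hmin v
    obtain ⟨w, hw⟩ := Finset.card_pos.1 h1
    exact ⟨w, (SimpleGraph.mem_neighborFinset G v w).1 hw⟩
  obtain ⟨σ, h1, h2, h3, h4, _⟩ := good_exists G Finset.univ
    (fun v _ => let ⟨w, hw⟩ := hedge v; ⟨w, Finset.mem_univ w, hw⟩)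
  have idem : ∀ u, σ (σ u) = σ u := fun u => h2 u (Finset.mem_univ u)
  have hadjσ : ∀ v, σ v ≠ v → G.Adj v (σ v) := fun v => h3 v (Finset.mem_univ v)
  have step1 : HomCount G.Adj H ≤
      ∏ c : {c : Fin n // σ c = c}, ∑ x : V,
        hdeg H x ^ Nat.card {u : Fin n // σ u = c.1 ∧ u ≠ c.1} :=
    le_trans (homCount_le_forest G.Adj H σ hadjσ) (card_forest_le H hsym σ idem)
  have hsum : ∑ c : {c : Fin n // σ c = c},
      (Nat.card {u : Fin n // σ u = c.1 ∧ u ≠ c.1} + 1) = n := by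
    rw [sum_fibers σ idem, Fintype.card_fin]
  have hℓ1 : ∀ c : {c : Fin n // σ c = c},
      1 ≤ Nat.card {u : Fin n // σ u = c.1 ∧ u ≠ c.1} := by
    intro c
    obtain ⟨v, _, hvne, hvfix⟩ := h4 c.1 (Finset.mem_univ _) c.2
    haveI : Nonempty {u : Fin n // σ u = c.1 ∧ u ≠ c.1} := ⟨⟨v, hvfix, hvne⟩⟩
    exact Nat.card_pos
  refine ⟨?_, by rw [hK2]⟩
  rw [hK2]
  calc (HomCount G.Adj H : ℝ)
      ≤ ((∏ c : {c : Fin n // σ c = c}, ∑ x : V,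
          hdeg H x ^ Nat.card {u : Fin n // σ u = c.1 ∧ u ≠ c.1} : ℕ) : ℝ) := by
        exact_mod_cast step1
    _ = ∏ c : {c : Fin n // σ c = c}, ((∑ x : V,
          hdeg H x ^ Nat.card {u : Fin n // σ u = c.1 ∧ u ≠ c.1} : ℕ) : ℝ) := by
        push_cast
        rfl
    _ ≤ ∏ c : {c : Fin n // σ c = c}, ((∑ v : V, hdeg H v : ℕ) : ℝ) ^
          (((Nat.card {u : Fin n // σ u = c.1 ∧ u ≠ c.1} : ℝ) + 1) / 2) := by
        apply Finset.prod_le_prod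
        · intro c _; positivity
        · intro c _
          exact sum_pow_le_rpow H Δ hΔd hΔ1 hcond _ (hℓ1 c)
    _ = ((∑ v : V, hdeg H v : ℕ) : ℝ) ^
          (∑ c : {c : Fin n // σ c = c},
            ((Nat.card {u : Fin n // σ u = c.1 ∧ u ≠ c.1} : ℝ) + 1) / 2) :=
        prod_rpow_const _ hsr0 _
    _ = ((∑ v : V, hdeg H v : ℕ) : ℝ) ^ ((n : ℝ) / 2) := by
        congr 1
        rw [← Finset.sum_div]
        congr 1
        have : ∑ c : {c : Fin n // σ c = c},
            ((Nat.card {u : Fin n // σ u = c.1 ∧ u ≠ c.1} : ℝ) + 1) =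
            ((∑ c : {c : Fin n // σ c = c},
              (Nat.card {u : Fin n // σ u = c.1 ∧ u ≠ c.1} + 1) : ℕ) : ℝ) := by
          push_cast
          rfl
        rw [this, hsum]
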